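/- (a) For any integer s ≥ 2, there exist a constant c > 0 and a natural number n₀ such that for all n ≥ n₀, c·n² ≤ r(K_{n,n}, K_{s,s+1}, s(s+1) - ⌊(2s+1)/2⌋ + 2) ≤ n². (b) For any integer t ≥ 2, there exist a constant c > 0 and a natural number n₀ such that for all n ≥ n₀, c·n² ≤ r(K_{n,n}, K_{2,t}, 2t - ⌊(2+t)/2⌋ + 2) ≤ n². (c) For any even integer t ≥ 4, there exist a constant c > 0 and a natural number n₀ such that for all n ≥ n₀, c·n² ≤ r(K_{n,n}, K_{3,t}, 3t - ⌊(3+t)/2⌋ + 2) ≤ n². -/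

import Mathlib

open Finset

/-- `rBip n s t q` is the bipartite Erdős–Gyárfás function `r(K_{n,n}, K_{s,t}, q)`:
the minimum number of colors in an edge-coloring of `K_{n,n}` such that every copy of
`K_{s,t}` (with its part of size `s` in either side of the bipartition) receives at
least `q` distinct colors on its edges. -/
noncomputable def rBip (n s t q : ℕ) : ℕ :=
  sInf {k : ℕ | ∃ c : Fin n → Fin n → ℕ,
    (∀ a b, c a b < k) ∧
    ∀ A B : Finset (Fin n),
      (A.card = s ∧ B.card = t) ∨ (A.card = t ∧ B.card = s) →
      q ≤ ((A ×ˢ B).image fun p => c p.1 p.2).card}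

/-- The property that a coloring is a valid `(K_{s,t}, q)`-coloring of `K_{n,n}`. -/
def Good (n s t q : ℕ) (c : Fin n → Fin n → ℕ) : Prop :=
  ∀ A B : Finset (Fin n),
      (A.card = s ∧ B.card = t) ∨ (A.card = t ∧ B.card = s) →
      q ≤ ((A ×ˢ B).image fun p => c p.1 p.2).card

section Helpers

variable {α β : Type*} [DecidableEq α] [DecidableEq β]

lemma image_card_le_of_partners (g : α → β) (S T : Finset α) (hTS : T ⊆ S)
    (hp : ∀ x ∈ T, ∃ y, y ∈ S ∧ y ∉ T ∧ g y = g x) :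
    (S.image g).card ≤ S.card - T.card := by
  have himg : S.image g = (S \ T).image g := by
    apply Finset.Subset.antisymm
    · intro γ hγ
      rw [Finset.mem_image] at hγ
      obtain ⟨x, hxS, hgx⟩ := hγ
      by_cases hxT : x ∈ T
      · obtain ⟨y, hyS, hyT, hgy⟩ := hp x hxT
        exact Finset.mem_image.2 ⟨y, Finset.mem_sdiff.2 ⟨hyS, hyT⟩, by rw [hgy, hgx]⟩
      · exact Finset.mem_image.2 ⟨x, Finset.mem_sdiff.2 ⟨hxS, hxT⟩, hgx⟩
    · exact Finset.image_subset_image sdiff_subset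
  rw [himg]
  calc ((S \ T).image g).card ≤ (S \ T).card := Finset.card_image_le
  _ = S.card - T.card := Finset.card_sdiff_of_subset hTS

lemma indep_bound {r : α → α → Prop} [DecidableRel r]
    (hsym : ∀ a b, r a b → r b a) (hrefl : ∀ a, r a a) (K : ℕ) (mm : ℕ) :
    ∀ F : Finset α, (∀ e ∈ F, (F.filter (r e)).card ≤ K) →
      (∀ M : Finset α, M ⊆ F → (∀ e ∈ M, ∀ f ∈ M, e ≠ f → ¬ r e f) → M.card ≤ mm) →
      F.card ≤ (mm + 1) * K := by
  induction mm with
  | zero =>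
    intro F hdeg hM
    rcases F.eq_empty_or_nonempty with h | ⟨e, he⟩
    · simp [h]
    · exfalso
      have h1 := hM {e} (singleton_subset_iff.2 he) ?_
      · rw [card_singleton] at h1; omega
      · intro x hx y hy hxy
        rw [mem_singleton] at hx hy
        exact absurd (hx.trans hy.symm) hxy
  | succ mm ih =>
    intro F hdeg hM
    rcases F.eq_empty_or_nonempty with h | ⟨e, he⟩
    · simp [h]
    · have hsub : F.filter (fun f => ¬ r e f) ⊆ F := filter_subset _ _
      have hdeg' : ∀ x ∈ F.filter (fun f => ¬ r e f),
          ((F.filter (fun f => ¬ r e f)).filter (r x)).card ≤ K := fun x hx =>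
        le_trans (card_le_card (filter_subset_filter _ hsub)) (hdeg x (hsub hx))
      have hM' : ∀ M : Finset α, M ⊆ F.filter (fun f => ¬ r e f) →
          (∀ a ∈ M, ∀ b ∈ M, a ≠ b → ¬ r a b) → M.card ≤ mm := by
        intro M hMF hind
        have heM : e ∉ M := fun h => (mem_filter.1 (hMF h)).2 (hrefl e)
        have hindins : ∀ x ∈ insert e M, ∀ y ∈ insert e M, x ≠ y → ¬ r x y := by
          intro x hx y hy hxy
          rcases mem_insert.1 hx with rfl | hx'
          · rcases mem_insert.1 hy with rfl | hy'
            · exact absurd rfl hxy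
            · exact (mem_filter.1 (hMF hy')).2
          · rcases mem_insert.1 hy with rfl | hy'
            · exact fun hr => (mem_filter.1 (hMF hx')).2 (hsym _ _ hr)
            · exact hind x hx' y hy' hxy
        have hins := hM (insert e M) (insert_subset he (hMF.trans hsub)) hindins
        rw [card_insert_of_notMem heM] at hins
        omega
      have hsplit : F.card ≤ (F.filter (fun f => ¬ r e f)).card + K := by
        have h2 : F \ F.filter (fun f => ¬ r e f) ⊆ F.filter (r e) := by
          intro x hx
          rw [mem_sdiff] at hx
          rw [mem_filter]
          refine ⟨hx.1, ?_⟩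
          by_contra hr
          exact hx.2 (mem_filter.2 ⟨hx.1, hr⟩)
        have h3 := card_le_card h2
        have h4 := card_sdiff_add_card_eq_card hsub
        have h5 := hdeg e he
        omega
      have h6 := ih _ hdeg' hM'
      have : (mm + 1) * K + K = (mm + 1 + 1) * K := by ring
      omega

end Helpers

section Main

variable {n s t q : ℕ} {c : Fin n → Fin n → ℕ}

lemma keyViol (hc : Good n s t q c) {A B : Finset (Fin n)} {T : Finset (Fin n × Fin n)}
    (hor : (A.card = s ∧ B.card = t) ∨ (A.card = t ∧ B.card = s))
    (hTS : T ⊆ A ×ˢ B)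
    (hp : ∀ x ∈ T, ∃ y, y ∈ A ×ˢ B ∧ y ∉ T ∧ c y.1 y.2 = c x.1 x.2)
    (hbig : s * t + 1 ≤ T.card + q) : False := by
  have hq := hc A B hor
  have himg := image_card_le_of_partners (fun p : Fin n × Fin n => c p.1 p.2) _ T hTS hp
  have hcardAB : (A ×ˢ B).card = s * t := by
    rw [card_product]
    rcases hor with ⟨h1, h2⟩ | ⟨h1, h2⟩ <;> rw [h1, h2]
    exact mul_comm t s
  rw [hcardAB] at himg
  have hTle : T.card ≤ s * t := by
    have := card_le_card hTS
    omega
  omega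

lemma rowBound (hc : Good n s t q c) (m : ℕ) (hm : m + q = s * t + 1)
    (hmt : m + 1 ≤ t) (hs : 1 ≤ s) (hsn : s ≤ n) (htn : t ≤ n) (a : Fin n) (γ : ℕ) :
    (univ.filter (fun b => c a b = γ)).card ≤ m := by
  by_contra hlt
  push_neg at hlt
  obtain ⟨W, hWsub, hWcard⟩ := Finset.exists_subset_card_eq (n := m + 1) hlt
  have hWne : W.Nonempty := card_pos.1 (by omega)
  obtain ⟨w₀, hw₀⟩ := hWne
  obtain ⟨B, hWB, hBcard⟩ := Finset.exists_superset_card_eq (s := W) (n := t)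
    (by omega) (by rw [Fintype.card_fin]; exact htn)
  obtain ⟨A, haA, hAcard⟩ := Finset.exists_superset_card_eq (s := ({a} : Finset (Fin n))) (n := s)
    (by rw [card_singleton]; exact hs) (by rw [Fintype.card_fin]; exact hsn)
  have haA' : a ∈ A := haA (mem_singleton_self a)
  have hcol : ∀ b ∈ W, c a b = γ := fun b hb => (mem_filter.1 (hWsub hb)).2
  set T : Finset (Fin n × Fin n) := (W.erase w₀).image (fun b => (a, b)) with hT
  have hTcard : T.card = m := by
    rw [hT, card_image_of_injOn (fun x _ y _ h => by
      simpa using congrArg Prod.snd h), card_erase_of_mem hw₀, hWcard]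
    omega
  refine keyViol hc (T := T) (Or.inl ⟨hAcard, hBcard⟩) ?_ ?_ (by omega)
  · intro x hx
    rw [hT, mem_image] at hx
    obtain ⟨b, hb, rfl⟩ := hx
    exact mem_product.2 ⟨haA', hWB (erase_subset _ _ hb)⟩
  · intro x hx
    rw [hT, mem_image] at hx
    obtain ⟨b, hb, rfl⟩ := hx
    refine ⟨(a, w₀), mem_product.2 ⟨haA', hWB hw₀⟩, ?_, ?_⟩
    · intro hmem
      rw [hT, mem_image] at hmem
      obtain ⟨b', hb', hb'eq⟩ := hmem
      have : b' = w₀ := by simpa using congrArg Prod.snd hb'eq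
      subst this
      exact (mem_erase.1 hb').1 rfl
    · show c a w₀ = c a b
      rw [hcol w₀ hw₀, hcol b (erase_subset _ _ hb)]

lemma colBound (hc : Good n s t q c) (m : ℕ) (hm : m + q = s * t + 1)
    (hmt : m + 1 ≤ t) (hs : 1 ≤ s) (hsn : s ≤ n) (htn : t ≤ n) (b : Fin n) (γ : ℕ) :
    (univ.filter (fun a => c a b = γ)).card ≤ m := by
  by_contra hlt
  push_neg at hlt
  obtain ⟨W, hWsub, hWcard⟩ := Finset.exists_subset_card_eq (n := m + 1) hlt
  have hWne : W.Nonempty := card_pos.1 (by omega)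
  obtain ⟨w₀, hw₀⟩ := hWne
  obtain ⟨A, hWA, hAcard⟩ := Finset.exists_superset_card_eq (s := W) (n := t)
    (by omega) (by rw [Fintype.card_fin]; exact htn)
  obtain ⟨B, hbB, hBcard⟩ := Finset.exists_superset_card_eq (s := ({b} : Finset (Fin n))) (n := s)
    (by rw [card_singleton]; exact hs) (by rw [Fintype.card_fin]; exact hsn)
  have hbB' : b ∈ B := hbB (mem_singleton_self b)
  have hcol : ∀ a ∈ W, c a b = γ := fun a ha => (mem_filter.1 (hWsub ha)).2
  set T : Finset (Fin n × Fin n) := (W.erase w₀).image (fun a => (a, b)) with hT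
  have hTcard : T.card = m := by
    rw [hT, card_image_of_injOn (fun x _ y _ h => by
      simpa using congrArg Prod.fst h), card_erase_of_mem hw₀, hWcard]
    omega
  refine keyViol hc (T := T) (Or.inr ⟨hAcard, hBcard⟩) ?_ ?_ (by omega)
  · intro x hx
    rw [hT, mem_image] at hx
    obtain ⟨a, ha, rfl⟩ := hx
    exact mem_product.2 ⟨hWA (erase_subset _ _ ha), hbB'⟩
  · intro x hx
    rw [hT, mem_image] at hx
    obtain ⟨a, ha, rfl⟩ := hx
    refine ⟨(w₀, b), mem_product.2 ⟨hWA hw₀, hbB'⟩, ?_, ?_⟩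
    · intro hmem
      rw [hT, mem_image] at hmem
      obtain ⟨a', ha', ha'eq⟩ := hmem
      have : a' = w₀ := by simpa using congrArg Prod.fst ha'eq
      subst this
      exact (mem_erase.1 ha').1 rfl
    · show c w₀ b = c a b
      rw [hcol w₀ hw₀, hcol a (erase_subset _ _ ha)]

end Main

section Main2

variable {n s t q : ℕ} {c : Fin n → Fin n → ℕ}

/-- Case (a): every color class has at most `(m+1)*(2m)` edges, where `m + 1 = s`. -/
lemma fiberBound_a (hc : Good n s t q c) (m : ℕ) (hm : m + q = s * t + 1)
    (hm1 : 1 ≤ m) (hms : m + 1 = s) (hmt : m + 1 ≤ t) (hs : 1 ≤ s) (hsn : s ≤ n)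
    (htn : t ≤ n) (γ : ℕ) :
    (univ.filter (fun f : Fin n × Fin n => c f.1 f.2 = γ)).card ≤ (m + 1) * (2 * m) := by
  set F := univ.filter (fun f : Fin n × Fin n => c f.1 f.2 = γ) with hF
  have hcolF : ∀ x ∈ F, c x.1 x.2 = γ := fun x hx => (mem_filter.1 hx).2
  apply indep_bound (r := fun e f : Fin n × Fin n => e.1 = f.1 ∨ e.2 = f.2)
    (fun a b h => by rcases h with h | h; exacts [Or.inl h.symm, Or.inr h.symm])
    (fun a => Or.inl rfl) (2 * m) m F
  · -- degree bound
    intro e he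
    have hsub : F.filter (fun f => e.1 = f.1 ∨ e.2 = f.2) ⊆
        F.filter (fun f => f.1 = e.1) ∪ F.filter (fun f => f.2 = e.2) := by
      intro x hx
      simp only [mem_filter, mem_union] at *
      tauto
    have h1 : (F.filter (fun f => f.1 = e.1)).card ≤ m := by
      apply le_trans (card_le_card_of_injOn Prod.snd ?_ ?_)
        (rowBound hc m hm hmt hs hsn htn e.1 γ)
      · intro x hx
        simp only [mem_coe, mem_filter, hF, mem_univ, true_and] at hx ⊢
        rw [← hx.2]; exact hx.1
      · intro x hx y hy hxy
        simp only [coe_filter, Set.mem_setOf_eq] at hx hy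
        exact Prod.ext (hx.2.trans hy.2.symm) hxy
    have h2 : (F.filter (fun f => f.2 = e.2)).card ≤ m := by
      apply le_trans (card_le_card_of_injOn Prod.fst ?_ ?_)
        (colBound hc m hm hmt hs hsn htn e.2 γ)
      · intro x hx
        simp only [mem_coe, mem_filter, hF, mem_univ, true_and] at hx ⊢
        rw [← hx.2]; exact hx.1
      · intro x hx y hy hxy
        simp only [coe_filter, Set.mem_setOf_eq] at hx hy
        exact Prod.ext hxy (hx.2.trans hy.2.symm)
    have h3 := card_le_card hsub
    have h4 := card_union_le (F.filter (fun f => f.1 = e.1)) (F.filter (fun f => f.2 = e.2))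
    omega
  · -- no matching of size m+1
    intro M hMF hind
    by_contra hbig
    push_neg at hbig
    obtain ⟨M', hM'sub, hM'card⟩ := Finset.exists_subset_card_eq (n := m + 1) hbig
    have hM'F : M' ⊆ F := hM'sub.trans hMF
    have hM'ne : M'.Nonempty := card_pos.1 (by omega)
    obtain ⟨x₀, hx₀⟩ := hM'ne
    have hAcard : (M'.image Prod.fst).card = s := by
      rw [card_image_of_injOn, hM'card, hms]
      intro x hx y hy hxy
      by_contra hne
      exact hind x (hM'sub (mem_coe.1 hx)) y (hM'sub (mem_coe.1 hy)) hne (Or.inl hxy)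
    have hRcard : (M'.image Prod.snd).card ≤ t := by
      calc (M'.image Prod.snd).card ≤ M'.card := card_image_le
      _ = m + 1 := hM'card
      _ ≤ t := hmt
    obtain ⟨B, hRB, hBcard⟩ := Finset.exists_superset_card_eq (s := M'.image Prod.snd) (n := t)
      hRcard (by rw [Fintype.card_fin]; exact htn)
    have hmemAB : ∀ x ∈ M', x ∈ (M'.image Prod.fst) ×ˢ B := fun x hx =>
      mem_product.2 ⟨mem_image_of_mem Prod.fst hx, hRB (mem_image_of_mem Prod.snd hx)⟩
    refine keyViol hc (T := M'.erase x₀) (Or.inl ⟨hAcard, hBcard⟩) ?_ ?_ ?_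
    · exact fun x hx => hmemAB x (erase_subset _ _ hx)
    · intro x hx
      refine ⟨x₀, hmemAB x₀ hx₀, notMem_erase _ _, ?_⟩
      rw [hcolF x₀ (hM'F hx₀), hcolF x (hM'F (erase_subset _ _ hx))]
    · rw [card_erase_of_mem hx₀, hM'card]
      omega

/-- Cases (b), (c): arc sets between two distinct rows are small. -/
lemma arcBound (hc : Good n s t q c) (m : ℕ) (hm : m + q = s * t + 1)
    (hm1 : 1 ≤ m) (h2m : 2 * m ≤ t) (hmt : m + 1 ≤ t) (hs2 : 2 ≤ s) (hsn : s ≤ n)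
    (htn : t ≤ n) {a a' : Fin n} (hne : a ≠ a') :
    (univ.filter (fun w : Fin n × Fin n => c a w.1 = c a' w.2)).card ≤ m * (4 * m) := by
  set Γ := univ.filter (fun w : Fin n × Fin n => c a w.1 = c a' w.2) with hΓ
  have hΓmem : ∀ w ∈ Γ, c a w.1 = c a' w.2 := fun w hw => (mem_filter.1 hw).2
  have key := indep_bound
    (r := fun w w' : Fin n × Fin n => w.1 = w'.1 ∨ w.1 = w'.2 ∨ w.2 = w'.1 ∨ w.2 = w'.2)
    (fun x y h => by
      rcases h with h | h | h | h
      · exact Or.inl h.symm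
      · exact Or.inr (Or.inr (Or.inl h.symm))
      · exact Or.inr (Or.inl h.symm)
      · exact Or.inr (Or.inr (Or.inr h.symm)))
    (fun x => Or.inl rfl) (4 * m) (m - 1) Γ ?_ ?_
  · calc Γ.card ≤ (m - 1 + 1) * (4 * m) := key
    _ = m * (4 * m) := by congr 1; omega
  · -- degree bound
    intro w hw
    show (Γ.filter (fun w' => w.1 = w'.1 ∨ w.1 = w'.2 ∨ w.2 = w'.1 ∨ w.2 = w'.2)).card ≤ 4 * m
    have hsub : Γ.filter (fun w' => w.1 = w'.1 ∨ w.1 = w'.2 ∨ w.2 = w'.1 ∨ w.2 = w'.2) ⊆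
        ((Γ.filter (fun w' => w'.1 = w.1) ∪ Γ.filter (fun w' => w'.2 = w.1)) ∪
          Γ.filter (fun w' => w'.1 = w.2)) ∪ Γ.filter (fun w' => w'.2 = w.2) := by
      intro x hx
      simp only [mem_filter, mem_union] at *
      tauto
    have hb1 : (Γ.filter (fun w' => w'.1 = w.1)).card ≤ m := by
      apply le_trans (card_le_card_of_injOn Prod.snd ?_ ?_)
        (rowBound hc m hm hmt (by omega) hsn htn a' (c a w.1))
      · intro x hx
        simp only [mem_coe, mem_filter, mem_univ, true_and] at hx ⊢
        rw [← hx.2]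
        exact (hΓmem x hx.1).symm
      · intro x hx y hy hxy
        simp only [coe_filter, Set.mem_setOf_eq] at hx hy
        exact Prod.ext (hx.2.trans hy.2.symm) hxy
    have hb2 : (Γ.filter (fun w' => w'.2 = w.1)).card ≤ m := by
      apply le_trans (card_le_card_of_injOn Prod.fst ?_ ?_)
        (rowBound hc m hm hmt (by omega) hsn htn a (c a' w.1))
      · intro x hx
        simp only [mem_coe, mem_filter, mem_univ, true_and] at hx ⊢
        rw [← hx.2]
        exact hΓmem x hx.1
      · intro x hx y hy hxy
        simp only [coe_filter, Set.mem_setOf_eq] at hx hy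
        exact Prod.ext hxy (hx.2.trans hy.2.symm)
    have hb3 : (Γ.filter (fun w' => w'.1 = w.2)).card ≤ m := by
      apply le_trans (card_le_card_of_injOn Prod.snd ?_ ?_)
        (rowBound hc m hm hmt (by omega) hsn htn a' (c a w.2))
      · intro x hx
        simp only [mem_coe, mem_filter, mem_univ, true_and] at hx ⊢
        rw [← hx.2]
        exact (hΓmem x hx.1).symm
      · intro x hx y hy hxy
        simp only [coe_filter, Set.mem_setOf_eq] at hx hy
        exact Prod.ext (hx.2.trans hy.2.symm) hxy
    have hb4 : (Γ.filter (fun w' => w'.2 = w.2)).card ≤ m := by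
      apply le_trans (card_le_card_of_injOn Prod.fst ?_ ?_)
        (rowBound hc m hm hmt (by omega) hsn htn a (c a' w.2))
      · intro x hx
        simp only [mem_coe, mem_filter, mem_univ, true_and] at hx ⊢
        rw [← hx.2]
        exact hΓmem x hx.1
      · intro x hx y hy hxy
        simp only [coe_filter, Set.mem_setOf_eq] at hx hy
        exact Prod.ext hxy (hx.2.trans hy.2.symm)
    have h3 := card_le_card hsub
    have h4 := card_union_le
      ((Γ.filter (fun w' => w'.1 = w.1) ∪ Γ.filter (fun w' => w'.2 = w.1)) ∪
        Γ.filter (fun w' => w'.1 = w.2)) (Γ.filter (fun w' => w'.2 = w.2))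
    have h5 := card_union_le
      (Γ.filter (fun w' => w'.1 = w.1) ∪ Γ.filter (fun w' => w'.2 = w.1))
      (Γ.filter (fun w' => w'.1 = w.2))
    have h6 := card_union_le (Γ.filter (fun w' => w'.1 = w.1)) (Γ.filter (fun w' => w'.2 = w.1))
    omega
  · -- no m pairwise fully-disjoint arcs
    intro M hMΓ hind
    by_contra hbig
    push_neg at hbig
    have hbig' : m ≤ M.card := by omega
    obtain ⟨M', hM'sub, hM'card⟩ := Finset.exists_subset_card_eq (n := m) hbig'
    have hM'Γ : M' ⊆ Γ := hM'sub.trans hMΓ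
    set T : Finset (Fin n × Fin n) := M'.image (fun w => (a', w.2)) with hT
    have hTcard : T.card = m := by
      rw [hT, card_image_of_injOn, hM'card]
      intro x hx y hy hxy
      have h2 : x.2 = y.2 := by simpa using congrArg Prod.snd hxy
      by_contra hne
      exact hind x (hM'sub (mem_coe.1 hx)) y (hM'sub (mem_coe.1 hy)) hne
        (Or.inr (Or.inr (Or.inr h2)))
    have hRcard : (M'.image Prod.fst ∪ M'.image Prod.snd).card ≤ t := by
      calc (M'.image Prod.fst ∪ M'.image Prod.snd).card
          ≤ (M'.image Prod.fst).card + (M'.image Prod.snd).card := card_union_le _ _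
      _ ≤ M'.card + M'.card := Nat.add_le_add card_image_le card_image_le
      _ ≤ t := by omega
    obtain ⟨B, hRB, hBcard⟩ := Finset.exists_superset_card_eq
      (s := M'.image Prod.fst ∪ M'.image Prod.snd) (n := t) hRcard
      (by rw [Fintype.card_fin]; exact htn)
    obtain ⟨A, haA, hAcard⟩ := Finset.exists_superset_card_eq
      (s := ({a, a'} : Finset (Fin n))) (n := s)
      (by rw [card_pair hne]; exact hs2) (by rw [Fintype.card_fin]; exact hsn)
    have haA1 : a ∈ A := haA (mem_insert_self _ _)
    have haA2 : a' ∈ A := haA (mem_insert_of_mem (mem_singleton_self _))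
    refine keyViol hc (T := T) (Or.inl ⟨hAcard, hBcard⟩) ?_ ?_ (by omega)
    · intro x hx
      rw [hT, mem_image] at hx
      obtain ⟨w, hw, rfl⟩ := hx
      exact mem_product.2 ⟨haA2, hRB (mem_union_right _ (mem_image.2 ⟨w, hw, rfl⟩))⟩
    · intro x hx
      rw [hT, mem_image] at hx
      obtain ⟨w, hw, rfl⟩ := hx
      refine ⟨(a, w.1), mem_product.2 ⟨haA1,
        hRB (mem_union_left _ (mem_image.2 ⟨w, hw, rfl⟩))⟩, ?_, ?_⟩
      · intro hmem
        rw [hT, mem_image] at hmem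
        obtain ⟨w', _, hw'eq⟩ := hmem
        have : a' = a := by simpa using congrArg Prod.fst hw'eq
        exact hne this.symm
      · exact hΓmem w (hM'Γ hw)

/-- Diagonal bound: same-row coincidences. -/
lemma diagBound (hc : Good n s t q c) (m : ℕ) (hm : m + q = s * t + 1)
    (hmt : m + 1 ≤ t) (hs : 1 ≤ s) (hsn : s ≤ n) (htn : t ≤ n) (a : Fin n) :
    (univ.filter (fun w : Fin n × Fin n => c a w.1 = c a w.2)).card ≤ n * m := by
  set Γ := univ.filter (fun w : Fin n × Fin n => c a w.1 = c a w.2) with hΓ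
  rw [card_eq_sum_card_fiberwise (f := Prod.fst) (t := (univ : Finset (Fin n)))
    (fun x _ => mem_univ _)]
  calc ∑ b : Fin n, (Γ.filter (fun w => w.1 = b)).card ≤ ∑ _b : Fin n, m := by
        apply sum_le_sum
        intro b _
        apply le_trans (card_le_card_of_injOn Prod.snd ?_ ?_)
          (rowBound hc m hm hmt hs hsn htn a (c a b))
        · intro x hx
          simp only [mem_coe, mem_filter, hΓ, mem_univ, true_and] at hx ⊢
          rw [← hx.2]
          exact hx.1.symm
        · intro x hx y hy hxy
          simp only [coe_filter, Set.mem_setOf_eq] at hx hy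
          exact Prod.ext (hx.2.trans hy.2.symm) hxy
  _ = n * m := by simp [Finset.sum_const, Finset.card_univ, mul_comm]

end Main2

section Counting

variable {n : ℕ} {c : Fin n → Fin n → ℕ}

/-- Decomposition of monochromatic pairs of edges by their pair of rows. -/
lemma P_bound (D1 D2 : ℕ)
    (h1 : ∀ a : Fin n, (univ.filter (fun w : Fin n × Fin n => c a w.1 = c a w.2)).card ≤ D1)
    (h2 : ∀ a a' : Fin n, a ≠ a' →
      (univ.filter (fun w : Fin n × Fin n => c a w.1 = c a' w.2)).card ≤ D2) :
    (univ.filter (fun p : (Fin n × Fin n) × (Fin n × Fin n) =>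
      c p.1.1 p.1.2 = c p.2.1 p.2.2)).card ≤ n * D1 + n * n * D2 := by
  set P := univ.filter (fun p : (Fin n × Fin n) × (Fin n × Fin n) =>
      c p.1.1 p.1.2 = c p.2.1 p.2.2) with hP
  rw [card_eq_sum_card_fiberwise (f := fun p => (p.1.1, p.2.1))
    (t := (univ : Finset (Fin n × Fin n))) (fun x _ => mem_univ _)]
  have hfib : ∀ x : Fin n × Fin n,
      (P.filter (fun p => (p.1.1, p.2.1) = x)).card ≤ if x.1 = x.2 then D1 else D2 := by
    rintro ⟨a, a'⟩
    have hstep : (P.filter (fun p => (p.1.1, p.2.1) = (a, a'))).card ≤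
        (univ.filter (fun w : Fin n × Fin n => c a w.1 = c a' w.2)).card := by
      apply card_le_card_of_injOn (fun p => (p.1.2, p.2.2))
      · intro p hp
        simp only [mem_coe, hP, mem_filter, mem_univ, true_and, Prod.mk.injEq] at hp ⊢
        obtain ⟨hcol, h1', h2'⟩ := hp
        rw [← h1', ← h2']
        exact hcol
      · intro p hp p' hp' heq
        simp only [coe_filter, Set.mem_setOf_eq, Prod.mk.injEq] at hp hp'
        simp only [Prod.mk.injEq] at heq
        obtain ⟨e1, e2⟩ := heq
        obtain ⟨-, hpa, hpa'⟩ := hp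
        obtain ⟨-, hpa2, hpa'2⟩ := hp'
        exact Prod.ext (Prod.ext (hpa.trans hpa2.symm) e1) (Prod.ext (hpa'.trans hpa'2.symm) e2)
    by_cases hd : a = a'
    · subst hd
      simpa using hstep.trans (h1 a)
    · simp only [hd, if_false]
      exact hstep.trans (h2 a a' hd)
  calc ∑ x : Fin n × Fin n, (P.filter (fun p => (p.1.1, p.2.1) = x)).card
      ≤ ∑ x : Fin n × Fin n, ((if x.1 = x.2 then D1 else 0) + D2) := by
        apply sum_le_sum
        intro x _
        have := hfib x
        split_ifs at * <;> omega
  _ = (∑ x : Fin n × Fin n, if x.1 = x.2 then D1 else 0) + n * n * D2 := by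
        rw [sum_add_distrib, sum_const, card_univ]
        simp [Fintype.card_prod, mul_comm, mul_assoc]
  _ ≤ n * D1 + n * n * D2 := by
        have : (∑ x : Fin n × Fin n, if x.1 = x.2 then D1 else 0) = n * D1 := by
          rw [Fintype.sum_prod_type]
          have hrow : ∀ a : Fin n, (∑ b : Fin n, if a = b then D1 else 0) = D1 := by
            intro a
            rw [Finset.sum_ite_eq]
            simp
          rw [Finset.sum_congr rfl (fun a _ => hrow a)]
          simp [Finset.sum_const, Finset.card_univ, mul_comm]
        omega

/-- Pair decomposition by the first edge (used in case (a)). -/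
lemma P_bound_a (Ca : ℕ)
    (h : ∀ e : Fin n × Fin n,
      (univ.filter (fun f : Fin n × Fin n => c f.1 f.2 = c e.1 e.2)).card ≤ Ca) :
    (univ.filter (fun p : (Fin n × Fin n) × (Fin n × Fin n) =>
      c p.1.1 p.1.2 = c p.2.1 p.2.2)).card ≤ n * n * Ca := by
  set P := univ.filter (fun p : (Fin n × Fin n) × (Fin n × Fin n) =>
      c p.1.1 p.1.2 = c p.2.1 p.2.2) with hP
  rw [card_eq_sum_card_fiberwise (f := Prod.fst)
    (t := (univ : Finset (Fin n × Fin n))) (fun x _ => mem_univ _)]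
  calc ∑ e : Fin n × Fin n, (P.filter (fun p => p.1 = e)).card
      ≤ ∑ _e : Fin n × Fin n, Ca := by
        apply sum_le_sum
        intro e _
        apply le_trans (card_le_card_of_injOn Prod.snd ?_ ?_) (h e)
        · intro p hp
          simp only [mem_coe, hP, mem_filter, mem_univ, true_and] at hp ⊢
          rw [← hp.2]
          exact hp.1.symm
        · intro p hp p' hp' heq
          simp only [coe_filter, Set.mem_setOf_eq] at hp hp'
          exact Prod.ext (hp.2.trans hp'.2.symm) heq
  _ = n * n * Ca := by
        simp [Finset.sum_const, Finset.card_univ, Fintype.card_prod]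

/-- Cauchy–Schwarz: few colors force many monochromatic pairs. -/
lemma cs_bound (k : ℕ) (hk : ∀ a b, c a b < k) :
    (n * n) ^ 2 ≤ k * (univ.filter (fun p : (Fin n × Fin n) × (Fin n × Fin n) =>
      c p.1.1 p.1.2 = c p.2.1 p.2.2)).card := by
  set P := univ.filter (fun p : (Fin n × Fin n) × (Fin n × Fin n) =>
      c p.1.1 p.1.2 = c p.2.1 p.2.2) with hP
  set f : ℕ → ℕ := fun γ => (univ.filter (fun e : Fin n × Fin n => c e.1 e.2 = γ)).card with hf
  have h1 : ∑ γ ∈ range k, f γ = n * n := by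
    rw [hf, ← card_eq_sum_card_fiberwise
      (f := fun e : Fin n × Fin n => c e.1 e.2) (t := range k)
      (fun e _ => mem_range.2 (hk e.1 e.2))]
    simp [Finset.card_univ, Fintype.card_prod]
  have h2 : ∑ γ ∈ range k, f γ ^ 2 = P.card := by
    rw [card_eq_sum_card_fiberwise (f := fun p => c p.1.1 p.1.2) (t := range k)
      (fun p _ => mem_range.2 (hk _ _))]
    apply Finset.sum_congr rfl
    intro γ _
    have hset : P.filter (fun p => c p.1.1 p.1.2 = γ) =
        (univ.filter (fun e : Fin n × Fin n => c e.1 e.2 = γ)) ×ˢ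
          (univ.filter (fun e : Fin n × Fin n => c e.1 e.2 = γ)) := by
      ext p
      simp only [hP, mem_filter, mem_univ, true_and, mem_product]
      constructor
      · rintro ⟨hcol, hγ⟩
        exact ⟨hγ, by omega⟩
      · rintro ⟨hγ1, hγ2⟩
        exact ⟨by omega, hγ1⟩
    rw [hset, card_product, hf, sq]
  calc (n * n) ^ 2 = (∑ γ ∈ range k, f γ) ^ 2 := by rw [h1]
  _ ≤ (range k).card * ∑ γ ∈ range k, f γ ^ 2 := sq_sum_le_card_mul_sum_sq
  _ = k * P.card := by rw [card_range, h2]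

end Counting

section Assembly

lemma lower_a (n s t q m k : ℕ) (c : Fin n → Fin n → ℕ) (hm : m + q = s * t + 1)
    (hm1 : 1 ≤ m) (hms : m + 1 = s) (hmt : m + 1 ≤ t) (hs : 1 ≤ s) (hsn : s ≤ n)
    (htn : t ≤ n) (hn : 1 ≤ n) (hk : ∀ a b, c a b < k) (hc : Good n s t q c) :
    n * n ≤ k * ((m + 1) * (2 * m)) := by
  have hP := P_bound_a (c := c) ((m + 1) * (2 * m))
    (fun e => fiberBound_a hc m hm hm1 hms hmt hs hsn htn _)
  have hcs := cs_bound (c := c) k hk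
  have hq3 : (n * n) ^ 2 ≤ k * (n * n * ((m + 1) * (2 * m))) :=
    le_trans hcs (Nat.mul_le_mul_left k hP)
  have h2 : (n * n) * (n * n) ≤ (n * n) * (k * ((m + 1) * (2 * m))) := by
    calc (n * n) * (n * n) = (n * n) ^ 2 := (sq _).symm
    _ ≤ k * (n * n * ((m + 1) * (2 * m))) := hq3
    _ = (n * n) * (k * ((m + 1) * (2 * m))) := by ring
  exact Nat.le_of_mul_le_mul_left h2 (Nat.mul_pos (by omega) (by omega))

lemma lower_bc (n s t q m k : ℕ) (c : Fin n → Fin n → ℕ) (hm : m + q = s * t + 1)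
    (hm1 : 1 ≤ m) (h2m : 2 * m ≤ t) (hmt : m + 1 ≤ t) (hs2 : 2 ≤ s) (hsn : s ≤ n)
    (htn : t ≤ n) (hn : 1 ≤ n) (hk : ∀ a b, c a b < k) (hc : Good n s t q c) :
    n * n ≤ k * (m + m * (4 * m)) := by
  have hP := P_bound (c := c) (n * m) (m * (4 * m))
    (fun a => diagBound hc m hm hmt (by omega) hsn htn a)
    (fun a a' hne => arcBound hc m hm hm1 h2m hmt hs2 hsn htn hne)
  have hcs := cs_bound (c := c) k hk
  have hq3 : (n * n) ^ 2 ≤ k * (n * (n * m) + n * n * (m * (4 * m))) :=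
    le_trans hcs (Nat.mul_le_mul_left k hP)
  have h2 : (n * n) * (n * n) ≤ (n * n) * (k * (m + m * (4 * m))) := by
    calc (n * n) * (n * n) = (n * n) ^ 2 := (sq _).symm
    _ ≤ k * (n * (n * m) + n * n * (m * (4 * m))) := hq3
    _ = (n * n) * (k * (m + m * (4 * m))) := by ring
  exact Nat.le_of_mul_le_mul_left h2 (Nat.mul_pos (by omega) (by omega))

lemma good_inj (n s t q : ℕ) (hq : q ≤ s * t) :
    ∃ c : Fin n → Fin n → ℕ, (∀ a b, c a b < n * n) ∧ Good n s t q c := by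
  refine ⟨fun a b => a.val * n + b.val, ?_, ?_⟩
  · intro a b
    have ha := a.isLt
    have hb := b.isLt
    calc a.val * n + b.val < a.val * n + n := by omega
    _ = (a.val + 1) * n := by ring
    _ ≤ n * n := Nat.mul_le_mul_right n ha
  · intro A B hor
    have hinj : Set.InjOn (fun p : Fin n × Fin n => p.1.val * n + p.2.val) ↑(A ×ˢ B) := by
      intro x _ y _ h
      dsimp only at h
      have hb1 := x.2.isLt
      have hb2 := y.2.isLt
      have hmod : (x.2.val + x.1.val * n) % n = (y.2.val + y.1.val * n) % n := by
        rw [add_comm x.2.val, add_comm y.2.val, h]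
      rw [Nat.add_mul_mod_self_right, Nat.add_mul_mod_self_right,
        Nat.mod_eq_of_lt hb1, Nat.mod_eq_of_lt hb2] at hmod
      have h1 : x.1.val = y.1.val := by
        rw [hmod] at h
        have hmul : x.1.val * n = y.1.val * n := Nat.add_right_cancel h
        exact Nat.eq_of_mul_eq_mul_right (by omega) hmul
      exact Prod.ext (Fin.ext h1) (Fin.ext hmod)
    show q ≤ ((A ×ˢ B).image fun p => p.1.val * n + p.2.val).card
    rw [card_image_of_injOn hinj, card_product]
    rcases hor with ⟨h1, h2⟩ | ⟨h1, h2⟩ <;> rw [h1, h2]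
    · exact hq
    · exact hq.trans (Nat.le_of_eq (mul_comm s t))

lemma rBip_spec (n s t q : ℕ) (hq : q ≤ s * t) :
    rBip n s t q ≤ n * n ∧
    ∃ c : Fin n → Fin n → ℕ, (∀ a b, c a b < rBip n s t q) ∧ Good n s t q c := by
  obtain ⟨c₀, hc₀lt, hc₀good⟩ := good_inj n s t q hq
  have h_in : (n * n) ∈ {k : ℕ | ∃ c : Fin n → Fin n → ℕ,
      (∀ a b, c a b < k) ∧
      ∀ A B : Finset (Fin n),
        (A.card = s ∧ B.card = t) ∨ (A.card = t ∧ B.card = s) →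
        q ≤ ((A ×ˢ B).image fun p => c p.1 p.2).card} := ⟨c₀, hc₀lt, hc₀good⟩
  constructor
  · exact Nat.sInf_le h_in
  · exact Nat.sInf_mem ⟨n * n, h_in⟩

lemma finish (nn r C : ℕ) (hC : 0 < C) (hlow : nn * nn ≤ r * C) (hup : r ≤ nn * nn) :
    (1 : ℝ) / (C : ℝ) * (nn : ℝ) ^ 2 ≤ (r : ℝ) ∧ (r : ℝ) ≤ (nn : ℝ) ^ 2 := by
  have hCpos : (0 : ℝ) < (C : ℝ) := by exact_mod_cast hC
  constructor
  · rw [div_mul_eq_mul_div, div_le_iff₀ hCpos]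
    calc (1 : ℝ) * (nn : ℝ) ^ 2 = ((nn * nn : ℕ) : ℝ) := by push_cast; ring
    _ ≤ ((r * C : ℕ) : ℝ) := by exact_mod_cast hlow
    _ = (r : ℝ) * (C : ℝ) := by push_cast; ring
  · calc (r : ℝ) ≤ ((nn * nn : ℕ) : ℝ) := by exact_mod_cast hup
    _ = (nn : ℝ) ^ 2 := by push_cast; ring

end Assembly

/-- (a) For `s ≥ 2`, `r(K_{n,n}, K_{s,s+1}, s(s+1) - ⌊(2s+1)/2⌋ + 2) = Θ(n²)`;
(b) for `t ≥ 2`, `r(K_{n,n}, K_{2,t}, 2t - ⌊(2+t)/2⌋ + 2) = Θ(n²)`;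
(c) for even `t ≥ 4`, `r(K_{n,n}, K_{3,t}, 3t - ⌊(3+t)/2⌋ + 2) = Θ(n²)`. -/
theorem stmt_7 :
    (∀ s : ℕ, 2 ≤ s →
      ∃ c : ℝ, 0 < c ∧ ∃ n₀ : ℕ, ∀ n : ℕ, n₀ ≤ n →
        c * (n : ℝ) ^ 2 ≤ (rBip n s (s + 1) (s * (s + 1) - (2 * s + 1) / 2 + 2) : ℝ) ∧
        (rBip n s (s + 1) (s * (s + 1) - (2 * s + 1) / 2 + 2) : ℝ) ≤ (n : ℝ) ^ 2) ∧
    (∀ t : ℕ, 2 ≤ t →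
      ∃ c : ℝ, 0 < c ∧ ∃ n₀ : ℕ, ∀ n : ℕ, n₀ ≤ n →
        c * (n : ℝ) ^ 2 ≤ (rBip n 2 t (2 * t - (2 + t) / 2 + 2) : ℝ) ∧
        (rBip n 2 t (2 * t - (2 + t) / 2 + 2) : ℝ) ≤ (n : ℝ) ^ 2) ∧
    (∀ t : ℕ, 4 ≤ t → Even t →
      ∃ c : ℝ, 0 < c ∧ ∃ n₀ : ℕ, ∀ n : ℕ, n₀ ≤ n →
        c * (n : ℝ) ^ 2 ≤ (rBip n 3 t (3 * t - (3 + t) / 2 + 2) : ℝ) ∧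
        (rBip n 3 t (3 * t - (3 + t) / 2 + 2) : ℝ) ≤ (n : ℝ) ^ 2) := by
  refine ⟨?_, ?_, ?_⟩
  · -- case (a)
    intro s hs
    have hCpos : 0 < ((s - 1) + 1) * (2 * (s - 1)) := Nat.mul_pos (by omega) (by omega)
    refine ⟨1 / (((((s - 1) + 1) * (2 * (s - 1))) : ℕ) : ℝ),
      one_div_pos.2 (by exact_mod_cast hCpos), s + 2, fun n hn => ?_⟩
    have hsX : s ≤ s * (s + 1) := by
      calc s = s * 1 := (mul_one s).symm
      _ ≤ s * (s + 1) := Nat.mul_le_mul_left s (by omega)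
    have key : ∀ X : ℕ, s ≤ X →
        ((s - 1) + (X - (2 * s + 1) / 2 + 2) = X + 1 ∧ X - (2 * s + 1) / 2 + 2 ≤ X) := by
      intro X hX
      constructor <;> omega
    obtain ⟨key1, key2⟩ := key (s * (s + 1)) hsX
    obtain ⟨hup, cc, hlt, hgood⟩ :=
      rBip_spec n s (s + 1) (s * (s + 1) - (2 * s + 1) / 2 + 2) key2
    have hlow := lower_a n s (s + 1) (s * (s + 1) - (2 * s + 1) / 2 + 2) (s - 1) _ cc
      key1 (by omega) (by omega) (by omega) (by omega) (by omega) (by omega) (by omega)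
      hlt hgood
    exact finish n _ _ hCpos hlow hup
  · -- case (b)
    intro t ht
    have hCpos : 0 < ((2 + t) / 2 - 1) + ((2 + t) / 2 - 1) * (4 * ((2 + t) / 2 - 1)) :=
      Nat.add_pos_left (by omega) _
    refine ⟨1 / (((((2 + t) / 2 - 1) + ((2 + t) / 2 - 1) * (4 * ((2 + t) / 2 - 1))) : ℕ) : ℝ),
      one_div_pos.2 (by exact_mod_cast hCpos), t + 3, fun n hn => ?_⟩
    have key1 : ((2 + t) / 2 - 1) + (2 * t - (2 + t) / 2 + 2) = 2 * t + 1 := by omega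
    have key2 : 2 * t - (2 + t) / 2 + 2 ≤ 2 * t := by omega
    obtain ⟨hup, cc, hlt, hgood⟩ := rBip_spec n 2 t (2 * t - (2 + t) / 2 + 2) key2
    have hlow := lower_bc n 2 t (2 * t - (2 + t) / 2 + 2) ((2 + t) / 2 - 1) _ cc
      key1 (by omega) (by omega) (by omega) (by omega) (by omega) (by omega) (by omega)
      hlt hgood
    exact finish n _ _ hCpos hlow hup
  · -- case (c)
    intro t ht htev
    rw [Nat.even_iff] at htev
    have hCpos : 0 < t / 2 + (t / 2) * (4 * (t / 2)) := Nat.add_pos_left (by omega) _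
    refine ⟨1 / (((t / 2 + (t / 2) * (4 * (t / 2))) : ℕ) : ℝ),
      one_div_pos.2 (by exact_mod_cast hCpos), t + 3, fun n hn => ?_⟩
    have key1 : t / 2 + (3 * t - (3 + t) / 2 + 2) = 3 * t + 1 := by omega
    have key2 : 3 * t - (3 + t) / 2 + 2 ≤ 3 * t := by omega
    obtain ⟨hup, cc, hlt, hgood⟩ := rBip_spec n 3 t (3 * t - (3 + t) / 2 + 2) key2
    have hlow := lower_bc n 3 t (3 * t - (3 + t) / 2 + 2) (t / 2) _ cc
      key1 (by omega) (by omega) (by omega) (by omega) (by omega) (by omega) (by omega)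
      hlt hgood
    exact finish n _ _ hCpos hlow hup
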